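/- Z is locally injective off its branch set: for every x = (x₁,x₂,x₃) ∈ ℝ³ such that x₁ and x₂ are not both odd integers, there is an open neighbourhood U of x such that the restriction of Z to U is injective. -/

import Mathlib

/-- Explicit vector in ℝ³ (with the Euclidean norm). -/
def vec3 (a b c : ℝ) : EuclideanSpace ℝ (Fin 3) := WithLp.toLp 2 ![a, b, c]

/-- The 4-periodic sawtooth: h(t) = t on [-1,1], h(t) = 2 - t on [1,3]. -/
noncomputable def h (t : ℝ) : ℝ := 1 - |4 * Int.fract ((t + 1) / 4) - 2|

/-- The sign function ε(t) = (-1)^⌊(t+1)/2⌋. -/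
noncomputable def eps (t : ℝ) : ℝ := (-1 : ℝ) ^ ⌊(t + 1) / 2⌋

/-- The Zorich-type map Z : ℝ³ → ℝ³. -/
noncomputable def Z (x : EuclideanSpace ℝ (Fin 3)) : EuclideanSpace ℝ (Fin 3) :=
  Real.exp (x 2) •
    vec3 (h (x 0)) (h (x 1)) (eps (x 0) * eps (x 1) * (1 - max |h (x 0)| |h (x 1)|))

/-- Rotation by π about the vertical line {(u,v,t) : t ∈ ℝ}. -/
noncomputable def Rot (u v : ℝ) (x : EuclideanSpace ℝ (Fin 3)) : EuclideanSpace ℝ (Fin 3) :=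
  vec3 (2 * u - x 0) (2 * v - x 1) (x 2)

lemma abs_neg_one_zpow' (n : ℤ) : |(-1:ℝ)^n| = 1 := by
  rcases Int.even_or_odd n with he | ho
  · rw [he.neg_one_zpow]; norm_num
  · rw [ho.neg_one_zpow]; norm_num

lemma neg_one_zpow_ne_zero (n : ℤ) : ((-1:ℝ))^n ≠ 0 := by
  intro h0
  have := abs_neg_one_zpow' n
  rw [h0] at this; simp at this

lemma abs_eps (t : ℝ) : |eps t| = 1 := abs_neg_one_zpow' _

lemma abs_h_le_one (t : ℝ) : |h t| ≤ 1 := by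
  have h1 : (0:ℝ) ≤ Int.fract ((t+1)/4) := Int.fract_nonneg _
  have h2 : Int.fract ((t+1)/4) < 1 := Int.fract_lt_one _
  have := abs_cases (4 * Int.fract ((t+1)/4) - 2)
  rw [h, abs_le]
  rcases this with ⟨he, _⟩ | ⟨he, _⟩ <;> rw [he] <;> constructor <;> linarith

lemma eps_eq (k : ℤ) (t : ℝ) (h1 : 2*(k:ℝ)-1 ≤ t) (h2 : t < 2*k+1) :
    eps t = (-1:ℝ)^k := by
  have : ⌊(t + 1) / 2⌋ = k := by
    rw [Int.floor_eq_iff]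
    constructor <;> [skip; push_cast] <;> linarith
  rw [eps, this]

lemma h_eq (k : ℤ) (t : ℝ) (h1 : 2*(k:ℝ)-1 ≤ t) (h2 : t < 2*k+1) :
    h t = (-1:ℝ)^k * (t - 2*k) := by
  rcases Int.even_or_odd k with ⟨q, hq⟩ | ⟨q, hq⟩
  · have hq' : (k:ℝ) = 2*q := by rw [hq]; push_cast; ring
    have hfl : ⌊(t+1)/4⌋ = q := by
      rw [Int.floor_eq_iff]
      constructor <;> [skip; push_cast] <;> linarith
    have hfr : Int.fract ((t+1)/4) = (t+1)/4 - q := by rw [Int.fract, hfl]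
    have hs : ((-1:ℝ))^k = 1 := Even.neg_one_zpow ⟨q, hq⟩
    rw [h, hfr, hs, abs_of_nonpos (by linarith), hq']
    ring
  · have hq' : (k:ℝ) = 2*q+1 := by rw [hq]; push_cast; ring
    have hfl : ⌊(t+1)/4⌋ = q := by
      rw [Int.floor_eq_iff]
      constructor <;> [skip; push_cast] <;> linarith
    have hfr : Int.fract ((t+1)/4) = (t+1)/4 - q := by rw [Int.fract, hfl]
    have hs : ((-1:ℝ))^k = -1 := Odd.neg_one_zpow ⟨q, hq⟩
    rw [h, hfr, hs, abs_of_nonneg (by linarith), hq']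
    ring

lemma abs_h_eq (k : ℤ) (t : ℝ) (h1 : 2*(k:ℝ)-1 ≤ t) (h2 : t < 2*k+1) :
    |h t| = |t - 2*k| := by
  rw [h_eq k t h1 h2, abs_mul, abs_neg_one_zpow', one_mul]

lemma key_odd (n : ℤ) (t : ℝ) (hl : 2*(n:ℝ) < t) (hr : t < 2*n+2) :
    |h t| = 1 - |t - (2*n+1)| ∧ eps t * (1 - |h t|) = (-1:ℝ)^n * ((2*n+1) - t) := by
  rcases lt_or_ge t (2*(n:ℝ)+1) with hc | hc
  · have hh := h_eq n t (by linarith) (by linarith)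
    have he := eps_eq n t (by linarith) (by linarith)
    have habs : |h t| = t - 2*n := by
      rw [hh, abs_mul, abs_neg_one_zpow', one_mul, abs_of_pos (by linarith)]
    constructor
    · rw [habs, abs_of_nonpos (by linarith)]; ring
    · rw [he, habs]; ring
  · have hh := h_eq (n+1) t (by push_cast; linarith) (by push_cast; linarith)
    have he := eps_eq (n+1) t (by push_cast; linarith) (by push_cast; linarith)
    have hs : ((-1:ℝ))^(n+1) = -((-1:ℝ))^n := by
      rw [zpow_add_one₀ (by norm_num : (-1:ℝ) ≠ 0)]; ring
    have habs : |h t| = 2*n+2 - t := by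
      rw [hh, abs_mul, abs_neg_one_zpow', one_mul, abs_of_nonpos (by push_cast; linarith)]
      push_cast; ring
    constructor
    · rw [habs, abs_of_nonneg (by linarith)]; ring
    · rw [he, habs, hs]; ring

lemma not_odd_mem (u : ℝ) (hu : ¬∃ m : ℤ, u = 2*m+1) :
    ∃ m : ℤ, 2*(m:ℝ)-1 < u ∧ u < 2*m+1 := by
  set m := ⌊(u+1)/2⌋ with hm
  have h1 : (m:ℝ) ≤ (u+1)/2 := Int.floor_le _
  have h2 : (u+1)/2 < m+1 := Int.lt_floor_add_one _
  refine ⟨m, ?_, by linarith⟩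
  rcases lt_or_eq_of_le (by linarith : 2*(m:ℝ)-1 ≤ u) with h | h
  · exact h
  · exact absurd ⟨m-1, by push_cast; linarith⟩ hu

lemma Z_apply (x : EuclideanSpace ℝ (Fin 3)) :
    Z x 0 = Real.exp (x 2) * h (x 0) ∧ Z x 1 = Real.exp (x 2) * h (x 1) ∧
    Z x 2 = Real.exp (x 2) * (eps (x 0) * eps (x 1) * (1 - max |h (x 0)| |h (x 1)|)) := by
  refine ⟨?_, ?_, ?_⟩ <;> simp [Z, vec3]

lemma Z_invariant (x : EuclideanSpace ℝ (Fin 3)) :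
    max |Z x 0| |Z x 1| + |Z x 2| = Real.exp (x 2) := by
  obtain ⟨e0, e1, e2⟩ := Z_apply x
  have hep := Real.exp_pos (x 2)
  set M := max |h (x 0)| |h (x 1)| with hM
  have hM1 : M ≤ 1 := max_le (abs_h_le_one _) (abs_h_le_one _)
  have habs0 : |Z x 0| = Real.exp (x 2) * |h (x 0)| := by rw [e0, abs_mul, abs_of_pos hep]
  have habs1 : |Z x 1| = Real.exp (x 2) * |h (x 1)| := by rw [e1, abs_mul, abs_of_pos hep]
  have hmax : max |Z x 0| |Z x 1| = Real.exp (x 2) * M := by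
    rw [habs0, habs1, hM]
    rcases le_total |h (x 0)| |h (x 1)| with hle | hle
    · rw [max_eq_right hle, max_eq_right (mul_le_mul_of_nonneg_left hle hep.le)]
    · rw [max_eq_left hle, max_eq_left (mul_le_mul_of_nonneg_left hle hep.le)]
  have habs2 : |Z x 2| = Real.exp (x 2) * (1 - M) := by
    rw [e2, abs_mul, abs_of_pos hep, abs_mul, abs_mul, abs_eps, abs_eps,
      abs_of_nonneg (by linarith), one_mul, one_mul]
  rw [hmax, habs2]; ring

lemma cont_app (i : Fin 3) : Continuous fun y : EuclideanSpace ℝ (Fin 3) => y i :=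
  (EuclideanSpace.proj (𝕜 := ℝ) i).continuous

lemma Z_a2_eq {a b : EuclideanSpace ℝ (Fin 3)} (hab : Z a = Z b) : a 2 = b 2 := by
  have : Real.exp (a 2) = Real.exp (b 2) := by
    rw [← Z_invariant a, ← Z_invariant b, hab]
  exact Real.exp_injective this

/-- Z is locally injective off its branch set: if x₁ and x₂ are not both odd
    integers, then Z is injective on some open neighbourhood of x. -/
theorem zorich_locally_injective (x : EuclideanSpace ℝ (Fin 3))
    (hx : ¬((∃ n : ℤ, x 0 = 2 * n + 1) ∧ (∃ m : ℤ, x 1 = 2 * m + 1))) :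
    ∃ U : Set (EuclideanSpace ℝ (Fin 3)), IsOpen U ∧ x ∈ U ∧ Set.InjOn Z U := by
  by_cases h0 : ∃ n : ℤ, x 0 = 2 * n + 1
  · -- x 0 is odd, x 1 is not odd
    have h1 : ¬∃ m : ℤ, x 1 = 2 * m + 1 := fun hm => hx ⟨h0, hm⟩
    obtain ⟨n, hn⟩ := h0
    obtain ⟨m, hm1, hm2⟩ := not_odd_mem (x 1) h1
    have hd : |x 1 - 2*m| < 1 := abs_lt.2 ⟨by linarith, by linarith⟩
    set d : ℝ := 1 - |x 1 - 2*m| with hd_def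
    set δ : ℝ := min (d/2) (min 1 (min (x 1 - (2*(m:ℝ)-1)) ((2*m+1) - x 1))) with hδ_def
    have hδ : 0 < δ :=
      lt_min (by linarith) (lt_min one_pos (lt_min (by linarith) (by linarith)))
    have hδ1 : δ ≤ d/2 := min_le_left _ _
    have hδ2 : δ ≤ 1 := le_trans (min_le_right _ _) (min_le_left _ _)
    have hδ3 : δ ≤ x 1 - (2*(m:ℝ)-1) :=
      le_trans (min_le_right _ _) (le_trans (min_le_right _ _) (min_le_left _ _))
    have hδ4 : δ ≤ 2*(m:ℝ)+1 - x 1 :=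
      le_trans (min_le_right _ _) (le_trans (min_le_right _ _) (min_le_right _ _))
    refine ⟨(fun y : EuclideanSpace ℝ (Fin 3) => y 0) ⁻¹' Set.Ioo (x 0 - δ) (x 0 + δ) ∩
        (fun y => y 1) ⁻¹' Set.Ioo (x 1 - δ) (x 1 + δ),
      ((isOpen_Ioo.preimage (cont_app 0)).inter (isOpen_Ioo.preimage (cont_app 1))),
      ⟨⟨by linarith, by linarith⟩, ⟨by linarith, by linarith⟩⟩, ?_⟩
    rintro a ⟨⟨ha01, ha02⟩, ha11, ha12⟩ b ⟨⟨hb01, hb02⟩, hb11, hb12⟩ hab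
    rw [hn] at ha01 ha02 hb01 hb02
    have h22 : a 2 = b 2 := Z_a2_eq hab
    -- bounds for first coordinates
    have hka := key_odd n (a 0) (by push_cast at ha01 ⊢; linarith) (by push_cast at ha02 ⊢; linarith)
    have hkb := key_odd n (b 0) (by push_cast at hb01 ⊢; linarith) (by push_cast at hb02 ⊢; linarith)
    -- bounds for second coordinates
    have ha1l : 2*(m:ℝ)-1 ≤ a 1 := by linarith
    have ha1r : a 1 < 2*(m:ℝ)+1 := by linarith
    have hb1l : 2*(m:ℝ)-1 ≤ b 1 := by linarith
    have hb1r : b 1 < 2*(m:ℝ)+1 := by linarith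
    -- cancel exponentials
    have c0 : Z a 0 = Z b 0 := by rw [hab]
    have c1 : Z a 1 = Z b 1 := by rw [hab]
    have c2 : Z a 2 = Z b 2 := by rw [hab]
    rw [(Z_apply a).1, (Z_apply b).1, h22] at c0
    rw [(Z_apply a).2.1, (Z_apply b).2.1, h22] at c1
    rw [(Z_apply a).2.2, (Z_apply b).2.2, h22] at c2
    have hene := Real.exp_ne_zero (b 2)
    have hh1 : h (a 1) = h (b 1) := mul_left_cancel₀ hene c1
    -- a 1 = b 1
    have la := h_eq m (a 1) ha1l ha1r
    have lb := h_eq m (b 1) hb1l hb1r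
    have hmne := neg_one_zpow_ne_zero m
    have hab1 : a 1 = b 1 := by
      rw [la, lb] at hh1
      have := mul_left_cancel₀ hmne hh1
      linarith
    -- compute the maxima
    have habs_a1 : |h (a 1)| < 1 - δ := by
      rw [abs_h_eq m (a 1) ha1l ha1r]
      have htr := abs_sub_le (a 1) (x 1) (2*(m:ℝ))
      have : |a 1 - x 1| < δ := abs_sub_lt_iff.2 ⟨by linarith, by linarith⟩
      linarith
    have habs_b1 : |h (b 1)| < 1 - δ := by
      rw [abs_h_eq m (b 1) hb1l hb1r]
      have htr := abs_sub_le (b 1) (x 1) (2*(m:ℝ))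
      have : |b 1 - x 1| < δ := abs_sub_lt_iff.2 ⟨by linarith, by linarith⟩
      linarith
    have habs_a0 : 1 - δ < |h (a 0)| := by
      rw [hka.1]
      have : |a 0 - (2*(n:ℝ)+1)| < δ := abs_sub_lt_iff.2 ⟨by linarith, by linarith⟩
      linarith
    have habs_b0 : 1 - δ < |h (b 0)| := by
      rw [hkb.1]
      have : |b 0 - (2*(n:ℝ)+1)| < δ := abs_sub_lt_iff.2 ⟨by linarith, by linarith⟩
      linarith
    have hmax_a : max |h (a 0)| |h (a 1)| = |h (a 0)| := max_eq_left (by linarith)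
    have hmax_b : max |h (b 0)| |h (b 1)| = |h (b 0)| := max_eq_left (by linarith)
    -- a 0 = b 0
    have hE : eps (a 0) * eps (a 1) * (1 - |h (a 0)|) =
        eps (b 0) * eps (b 1) * (1 - |h (b 0)|) := by
      have := mul_left_cancel₀ hene c2
      rwa [hmax_a, hmax_b] at this
    rw [eps_eq m (a 1) ha1l ha1r, eps_eq m (b 1) hb1l hb1r] at hE
    have hE2 : ((-1:ℝ))^m * (eps (a 0) * (1 - |h (a 0)|)) =
        ((-1:ℝ))^m * (eps (b 0) * (1 - |h (b 0)|)) := by linear_combination hE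
    have hE3 := mul_left_cancel₀ hmne hE2
    rw [hka.2, hkb.2] at hE3
    have hE4 := mul_left_cancel₀ (neg_one_zpow_ne_zero n) hE3
    have hab0 : a 0 = b 0 := by linarith
    ext i
    fin_cases i <;> assumption
  · by_cases h1 : ∃ m : ℤ, x 1 = 2 * m + 1
    · -- x 1 is odd, x 0 is not odd
      obtain ⟨n, hn⟩ := h1
      obtain ⟨m, hm1, hm2⟩ := not_odd_mem (x 0) h0
      have hd : |x 0 - 2*m| < 1 := abs_lt.2 ⟨by linarith, by linarith⟩
      set d : ℝ := 1 - |x 0 - 2*m| with hd_def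
      set δ : ℝ := min (d/2) (min 1 (min (x 0 - (2*(m:ℝ)-1)) ((2*m+1) - x 0))) with hδ_def
      have hδ : 0 < δ :=
        lt_min (by linarith) (lt_min one_pos (lt_min (by linarith) (by linarith)))
      have hδ1 : δ ≤ d/2 := min_le_left _ _
      have hδ2 : δ ≤ 1 := le_trans (min_le_right _ _) (min_le_left _ _)
      have hδ3 : δ ≤ x 0 - (2*(m:ℝ)-1) :=
        le_trans (min_le_right _ _) (le_trans (min_le_right _ _) (min_le_left _ _))
      have hδ4 : δ ≤ 2*(m:ℝ)+1 - x 0 :=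
        le_trans (min_le_right _ _) (le_trans (min_le_right _ _) (min_le_right _ _))
      refine ⟨(fun y : EuclideanSpace ℝ (Fin 3) => y 0) ⁻¹' Set.Ioo (x 0 - δ) (x 0 + δ) ∩
          (fun y => y 1) ⁻¹' Set.Ioo (x 1 - δ) (x 1 + δ),
        ((isOpen_Ioo.preimage (cont_app 0)).inter (isOpen_Ioo.preimage (cont_app 1))),
        ⟨⟨by linarith, by linarith⟩, ⟨by linarith, by linarith⟩⟩, ?_⟩
      rintro a ⟨⟨ha01, ha02⟩, ha11, ha12⟩ b ⟨⟨hb01, hb02⟩, hb11, hb12⟩ hab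
      rw [hn] at ha11 ha12 hb11 hb12
      have h22 : a 2 = b 2 := Z_a2_eq hab
      have hka := key_odd n (a 1) (by push_cast at ha11 ⊢; linarith) (by push_cast at ha12 ⊢; linarith)
      have hkb := key_odd n (b 1) (by push_cast at hb11 ⊢; linarith) (by push_cast at hb12 ⊢; linarith)
      have ha0l : 2*(m:ℝ)-1 ≤ a 0 := by linarith
      have ha0r : a 0 < 2*(m:ℝ)+1 := by linarith
      have hb0l : 2*(m:ℝ)-1 ≤ b 0 := by linarith
      have hb0r : b 0 < 2*(m:ℝ)+1 := by linarith
      have c0 : Z a 0 = Z b 0 := by rw [hab]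
      have c2 : Z a 2 = Z b 2 := by rw [hab]
      rw [(Z_apply a).1, (Z_apply b).1, h22] at c0
      rw [(Z_apply a).2.2, (Z_apply b).2.2, h22] at c2
      have hene := Real.exp_ne_zero (b 2)
      have hh0 : h (a 0) = h (b 0) := mul_left_cancel₀ hene c0
      have la := h_eq m (a 0) ha0l ha0r
      have lb := h_eq m (b 0) hb0l hb0r
      have hmne := neg_one_zpow_ne_zero m
      have hab0 : a 0 = b 0 := by
        rw [la, lb] at hh0
        have := mul_left_cancel₀ hmne hh0
        linarith
      have habs_a0 : |h (a 0)| < 1 - δ := by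
        rw [abs_h_eq m (a 0) ha0l ha0r]
        have htr := abs_sub_le (a 0) (x 0) (2*(m:ℝ))
        have : |a 0 - x 0| < δ := abs_sub_lt_iff.2 ⟨by linarith, by linarith⟩
        linarith
      have habs_b0 : |h (b 0)| < 1 - δ := by
        rw [abs_h_eq m (b 0) hb0l hb0r]
        have htr := abs_sub_le (b 0) (x 0) (2*(m:ℝ))
        have : |b 0 - x 0| < δ := abs_sub_lt_iff.2 ⟨by linarith, by linarith⟩
        linarith
      have habs_a1 : 1 - δ < |h (a 1)| := by
        rw [hka.1]
        have : |a 1 - (2*(n:ℝ)+1)| < δ := abs_sub_lt_iff.2 ⟨by linarith, by linarith⟩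
        linarith
      have habs_b1 : 1 - δ < |h (b 1)| := by
        rw [hkb.1]
        have : |b 1 - (2*(n:ℝ)+1)| < δ := abs_sub_lt_iff.2 ⟨by linarith, by linarith⟩
        linarith
      have hmax_a : max |h (a 0)| |h (a 1)| = |h (a 1)| := max_eq_right (by linarith)
      have hmax_b : max |h (b 0)| |h (b 1)| = |h (b 1)| := max_eq_right (by linarith)
      have hE : eps (a 0) * eps (a 1) * (1 - |h (a 1)|) =
          eps (b 0) * eps (b 1) * (1 - |h (b 1)|) := by
        have := mul_left_cancel₀ hene c2
        rwa [hmax_a, hmax_b] at this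
      rw [eps_eq m (a 0) ha0l ha0r, eps_eq m (b 0) hb0l hb0r] at hE
      have hE2 : ((-1:ℝ))^m * (eps (a 1) * (1 - |h (a 1)|)) =
          ((-1:ℝ))^m * (eps (b 1) * (1 - |h (b 1)|)) := by linear_combination hE
      have hE3 := mul_left_cancel₀ hmne hE2
      rw [hka.2, hkb.2] at hE3
      have hE4 := mul_left_cancel₀ (neg_one_zpow_ne_zero n) hE3
      have hab1 : a 1 = b 1 := by linarith
      ext i
      fin_cases i <;> assumption
    · -- neither coordinate is odd
      obtain ⟨k, hk1, hk2⟩ := not_odd_mem (x 0) h0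
      obtain ⟨m, hm1, hm2⟩ := not_odd_mem (x 1) h1
      refine ⟨(fun y : EuclideanSpace ℝ (Fin 3) => y 0) ⁻¹' Set.Ioo (2*(k:ℝ)-1) (2*k+1) ∩
          (fun y => y 1) ⁻¹' Set.Ioo (2*(m:ℝ)-1) (2*m+1),
        ((isOpen_Ioo.preimage (cont_app 0)).inter (isOpen_Ioo.preimage (cont_app 1))),
        ⟨⟨hk1, hk2⟩, ⟨hm1, hm2⟩⟩, ?_⟩
      rintro a ⟨⟨ha01, ha02⟩, ha11, ha12⟩ b ⟨⟨hb01, hb02⟩, hb11, hb12⟩ hab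
      have h22 : a 2 = b 2 := Z_a2_eq hab
      have c0 : Z a 0 = Z b 0 := by rw [hab]
      have c1 : Z a 1 = Z b 1 := by rw [hab]
      rw [(Z_apply a).1, (Z_apply b).1, h22] at c0
      rw [(Z_apply a).2.1, (Z_apply b).2.1, h22] at c1
      have hene := Real.exp_ne_zero (b 2)
      have hh0 : h (a 0) = h (b 0) := mul_left_cancel₀ hene c0
      have hh1 : h (a 1) = h (b 1) := mul_left_cancel₀ hene c1
      have hab0 : a 0 = b 0 := by
        rw [h_eq k (a 0) ha01.le ha02, h_eq k (b 0) hb01.le hb02] at hh0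
        have := mul_left_cancel₀ (neg_one_zpow_ne_zero k) hh0
        linarith
      have hab1 : a 1 = b 1 := by
        rw [h_eq m (a 1) ha11.le ha12, h_eq m (b 1) hb11.le hb12] at hh1
        have := mul_left_cancel₀ (neg_one_zpow_ne_zero m) hh1
        linarith
      ext i
      fin_cases i <;> assumption
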